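/- For any weak composition s, the s-Tamari poset (the restriction of the s-weak order to s-Tamari trees) is a sublattice of the s-weak order: the join and meet of two s-Tamari trees in the s-weak order are s-Tamari trees. -/

import Mathlib

/-- Planar rooted trees: leaves are unlabeled; internal nodes carry a natural
number label and an ordered list of children. -/
inductive STree : Type where
  | leaf : STree
  | node : ℕ → List STree → STree

namespace STree

mutual
  /-- `x` occurs as the label of an internal node of the tree. -/
  def mem (x : ℕ) : STree → Bool
    | .leaf => false
    | .node a cs => x == a || memL x cs
  def memL (x : ℕ) : List STree → Bool
    | [] => false
    | t :: ts => mem x t || memL x ts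
end

mutual
  /-- The list of internal node labels, in preorder. -/
  def labels : STree → List ℕ
    | .leaf => []
    | .node a cs => a :: labelsL cs
  def labelsL : List STree → List ℕ
    | [] => []
    | t :: ts => labels t ++ labelsL ts
end

mutual
  /-- Local well-formedness for the signature `s` : an internal node labeled `a`
  has `s a + 1` children, and all labels below it are smaller than `a`. -/
  def wf (s : ℕ → ℕ) : STree → Prop
    | .leaf => True
    | .node a cs => cs.length = s a + 1 ∧ (∀ b ∈ labelsL cs, b < a) ∧ wfL s cs
  def wfL (s : ℕ → ℕ) : List STree → Prop
    | [] => True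
    | t :: ts => wf s t ∧ wfL s ts
end

/-- `T` is an `s`-decreasing tree: its internal nodes are labeled bijectively by
`1, …, n`, node `i` has `s i + 1` ordered children, and all descendants of a node
have smaller labels. -/
def IsSDecreasingTree (n : ℕ) (s : ℕ → ℕ) (T : STree) : Prop :=
  wf s T ∧ (labels T).Perm (List.range' 1 n)

/-- Index of the first tree of the list containing the label `x`. -/
def idxOf (x : ℕ) : List STree → ℕ
  | [] => 0
  | t :: ts => if mem x t then 0 else idxOf x ts + 1

mutual
  /-- The cardinality `card_T(y,x)` of the pair `(y,x)` in the tree: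
  `0` if `x` is (weakly) left of `y`, `i` if `x` lies in the `i`-th child
  subtree of `y`, and `s y` if `x` is right of `y`. -/
  def card (s : ℕ → ℕ) (y x : ℕ) : STree → ℕ
    | .leaf => 0
    | .node a cs => if a = y then idxOf x cs else cardL s y x cs
  def cardL (s : ℕ → ℕ) (y x : ℕ) : List STree → ℕ
    | [] => 0
    | t :: ts =>
      if mem y t then
        (if mem x t then card s y x t else if memL x ts then s y else 0)
      else (if mem x t then 0 else cardL s y x ts)
end

/-- The tree-inversion multiset of `T`, as a multiplicity function on pairs
`(y,x)` with `1 ≤ x < y ≤ n`. -/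
def treeInv (n : ℕ) (s : ℕ → ℕ) (T : STree) : ℕ → ℕ → ℕ := fun y x =>
  if 1 ≤ x ∧ x < y ∧ y ≤ n then card s y x T else 0

/-- A multi inversion set on `1, …, n` bounded by the weak composition `s`. -/
def IsMultiInvSet (n : ℕ) (s : ℕ → ℕ) (I : ℕ → ℕ → ℕ) : Prop :=
  (∀ y x, I y x ≤ s y) ∧ ∀ y x, ¬(1 ≤ x ∧ x < y ∧ y ≤ n) → I y x = 0

/-- Transitivity: for `a < b < c`, `card(c,b) = i` implies `card(b,a) = 0` or
`card(c,a) ≥ i`. -/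
def InvTransitive (I : ℕ → ℕ → ℕ) : Prop :=
  ∀ a b c : ℕ, a < b → b < c → I b a = 0 ∨ I c b ≤ I c a

/-- Planarity: for `a < b < c`, `card(c,a) = i` implies `card(b,a) = s b` or
`card(c,b) ≥ i`. -/
def InvPlanar (s : ℕ → ℕ) (I : ℕ → ℕ → ℕ) : Prop :=
  ∀ a b c : ℕ, a < b → b < c → I b a = s b ∨ I c a ≤ I c b

/-- An `s`-tree-inversion set: a bounded multi inversion set that is transitive
and planar. -/
def IsTreeInvSet (n : ℕ) (s : ℕ → ℕ) (I : ℕ → ℕ → ℕ) : Prop :=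
  IsMultiInvSet n s I ∧ InvTransitive I ∧ InvPlanar s I

/-- Inclusion of multi inversion sets: pointwise comparison of multiplicities. -/
def invLE (I J : ℕ → ℕ → ℕ) : Prop := ∀ y x, I y x ≤ J y x

/-- The `s`-weak order: inclusion of tree-inversion multisets. -/
def sWeakLE (n : ℕ) (s : ℕ → ℕ) (T R : STree) : Prop :=
  invLE (treeInv n s T) (treeInv n s R)

/-- Union of multi inversion sets: pointwise maximum. -/
def invUnion (I J : ℕ → ℕ → ℕ) : ℕ → ℕ → ℕ := fun y x => max (I y x) (J y x)

/-- Transitive closure: `tc I (c,a)` is the maximal value of `I (b₁, b₂)` over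
all transitivity paths `c = b₁ > b₂ > … > b_k = a` (consecutive entries have
positive multiplicity). -/
noncomputable def tc (I : ℕ → ℕ → ℕ) : ℕ → ℕ → ℕ := fun c a =>
  sSup {v | ∃ (b : ℕ) (l : List ℕ),
    List.Chain (fun u w => w < u ∧ 0 < I u w) c (b :: l) ∧
    (b :: l).getLast (List.cons_ne_nil b l) = a ∧ v = I c b}

/-- Adding the inversion `(c,a)`: increase its multiplicity by one. -/
def addInv (I : ℕ → ℕ → ℕ) (c a : ℕ) : ℕ → ℕ → ℕ := fun y x =>
  if y = c ∧ x = a then I y x + 1 else I y x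

mutual
  /-- `a` is a (proper) descendant of the node labeled `c`. -/
  def descIn (c a : ℕ) : STree → Bool
    | .leaf => false
    | .node b cs => (b == c && memL a cs) || descInL c a cs
  def descInL (c a : ℕ) : List STree → Bool
    | [] => false
    | t :: ts => descIn c a t || descInL c a ts
end

mutual
  /-- `a` belongs to the rightmost child subtree of the node labeled `c`. -/
  def inRight (c a : ℕ) : STree → Bool
    | .leaf => false
    | .node b cs =>
      (b == c && (match cs.getLast? with
        | some t => mem a t
        | none => false)) || inRightL c a cs
  def inRightL (c a : ℕ) : List STree → Bool
    | [] => false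
    | t :: ts => inRight c a t || inRightL c a ts
end

mutual
  /-- `a` belongs to the leftmost child subtree of the node labeled `c`. -/
  def inLeft (c a : ℕ) : STree → Bool
    | .leaf => false
    | .node b cs =>
      (b == c && (match cs.head? with
        | some t => mem a t
        | none => false)) || inLeftL c a cs
  def inLeftL (c a : ℕ) : List STree → Bool
    | [] => false
    | t :: ts => inLeft c a t || inLeftL c a ts
end

mutual
  /-- The rightmost child subtree of the node labeled `a` is empty (a leaf). -/
  def rightEmpty (a : ℕ) : STree → Bool
    | .leaf => false
    | .node b cs =>
      (b == a && (match cs.getLast? with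
        | some .leaf => true
        | _ => false)) || rightEmptyL a cs
  def rightEmptyL (a : ℕ) : List STree → Bool
    | [] => false
    | t :: ts => rightEmpty a t || rightEmptyL a ts
end

/-- `(a,c)` is a tree-ascent of `T`: `a` is a descendant of `c`, not in the
rightmost subtree of `c`; `a` lies in the rightmost subtree of any `b` with
`a < b < c` having `a` as a descendant; and if `s a > 0` the rightmost
(strict right) subtree of `a` is empty. -/
def IsTreeAscent (s : ℕ → ℕ) (T : STree) (a c : ℕ) : Prop :=
  a < c ∧ descIn c a T = true ∧ inRight c a T = false ∧
  (∀ b : ℕ, a < b → b < c → descIn b a T = true → inRight b a T = true) ∧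
  (0 < s a → rightEmpty a T = true)

/-- `a` is the root label of the tree. -/
def hasRoot (a : ℕ) : STree → Bool
  | .leaf => false
  | .node b _ => a == b

mutual
  /-- `a` is a direct child of the node `c`, but not its rightmost child. -/
  def nonRightChild (c a : ℕ) : STree → Bool
    | .leaf => false
    | .node b cs => (b == c && cs.dropLast.any (hasRoot a)) || nonRightChildL c a cs
  def nonRightChildL (c a : ℕ) : List STree → Bool
    | [] => false
    | t :: ts => nonRightChild c a t || nonRightChildL c a ts
end

/-- `(a,c)` is a Tamari-ascent of `T`: `a` is a non-right child of `c`. -/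
def IsTamariAscent (T : STree) (a c : ℕ) : Prop :=
  a < c ∧ nonRightChild c a T = true

mutual
  /-- Horizontal mirror image of a tree: the order of children is reversed at
  every internal node. -/
  def mirror : STree → STree
    | .leaf => .leaf
    | .node a cs => .node a (mirrorL cs)
  def mirrorL : List STree → List STree
    | [] => []
    | t :: ts => mirrorL ts ++ [mirror t]
end

/-- `T` is an `s`-Tamari tree: `card(c,a) ≤ card(c,b)` for all `a < b < c`. -/
def TamariProp (n : ℕ) (s : ℕ → ℕ) (T : STree) : Prop :=
  ∀ a b c : ℕ, a < b → b < c → treeInv n s T c a ≤ treeInv n s T c b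

/-- `T` is an `s`-maximal-Tamari tree: `card(b,a) = s b` implies
`card(c,a) = s c` for all `c > b`. -/
def MaxTamariProp (n : ℕ) (s : ℕ → ℕ) (T : STree) : Prop :=
  ∀ a b c : ℕ, 1 ≤ a → a < b → b < c → c ≤ n →
    treeInv n s T b a = s b → treeInv n s T c a = s c

/-- The projection `π↓` on inversion sets:
`card_Q(c,a) = min { card_T(c,b) : a ≤ b < c }`. -/
noncomputable def pidownInv (n : ℕ) (s : ℕ → ℕ) (T : STree) : ℕ → ℕ → ℕ :=
  fun c a => sInf {v | ∃ b : ℕ, a ≤ b ∧ b < c ∧ v = treeInv n s T c b}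

open scoped Classical in
/-- The projection `π↑` on inversion sets: `card_R(c,a) = s c` if there is
`a < b < c` with `card_T(b,a) = s b`, and `card_R(c,a) = card_T(c,a)` otherwise. -/
noncomputable def piupInv (n : ℕ) (s : ℕ → ℕ) (T : STree) : ℕ → ℕ → ℕ :=
  fun c a =>
    if 1 ≤ a ∧ a < c ∧ c ≤ n then
      if ∃ b : ℕ, a < b ∧ b < c ∧ treeInv n s T b a = s b then s c
      else treeInv n s T c a
    else 0

end STree

namespace STree

mutual
theorem mem_iff (x : ℕ) : ∀ t : STree, mem x t = true ↔ x ∈ labels t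
  | .leaf => by simp [mem, labels]
  | .node a cs => by
      simp [mem, labels, memL_iff x cs, or_comm]
theorem memL_iff (x : ℕ) : ∀ l : List STree, memL x l = true ↔ x ∈ labelsL l
  | [] => by simp [memL, labelsL]
  | t :: ts => by simp [memL, labelsL, mem_iff x t, memL_iff x ts]
end

end STree
namespace STree

theorem idxOf_lt_length (x : ℕ) : ∀ l : List STree, memL x l = true → idxOf x l < l.length
  | [], h => by simp [memL] at h
  | t :: ts, h => by
      simp [memL] at h
      by_cases hx : mem x t = true
      · simp [idxOf, hx]
      · have : memL x ts = true := by tauto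
        simp [idxOf, hx]
        exact idxOf_lt_length x ts this

theorem wfL_forall (s : ℕ → ℕ) : ∀ l : List STree, wfL s l → ∀ t ∈ l, wf s t
  | [], _, t, ht => by simp at ht
  | t' :: ts, h, t, ht => by
      rw [wfL] at h
      rcases List.mem_cons.mp ht with h1 | h1
      · exact h1 ▸ h.1
      · exact wfL_forall s ts h.2 t h1

mutual
theorem card_le (s : ℕ → ℕ) (y x : ℕ) (hxy : x ≠ y) :
    ∀ t : STree, wf s t → mem x t = true → card s y x t ≤ s y
  | .leaf, _, hx => by simp [mem] at hx
  | .node a cs, hw, hx => by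
      rw [wf] at hw
      rw [card]
      by_cases hay : a = y
      · subst hay
        rw [if_pos rfl]
        rw [mem] at hx
        simp at hx
        have hmx : memL x cs = true := by
          rcases hx with h1 | h1
          · exact absurd h1 hxy
          · exact h1
        have := idxOf_lt_length x cs hmx
        omega
      · rw [if_neg hay]
        exact cardL_le s y x hxy cs hw.2.2
theorem cardL_le (s : ℕ → ℕ) (y x : ℕ) (hxy : x ≠ y) :
    ∀ l : List STree, wfL s l → cardL s y x l ≤ s y
  | [], _ => by simp [cardL]
  | t :: ts, hw => by
      rw [wfL] at hw
      rw [cardL]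
      by_cases hyt : mem y t = true
      · rw [if_pos hyt]
        by_cases hxt : mem x t = true
        · rw [if_pos hxt]; exact card_le s y x hxy t hw.1 hxt
        · rw [if_neg hxt]; split <;> omega
      · rw [if_neg hyt]
        split
        · omega
        · exact cardL_le s y x hxy ts hw.2
end

end STree
namespace STree

theorem cardL_zero_of_idx (s : ℕ → ℕ) (b a : ℕ) :
    ∀ l : List STree, memL a l = true → idxOf a l < idxOf b l → cardL s b a l = 0
  | [], h, _ => by simp [memL] at h
  | t :: ts, h, hidx => by
      by_cases hb : mem b t = true
      · simp [idxOf, hb] at hidx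
      · by_cases ha : mem a t = true
        · simp [cardL, hb, ha]
        · have hma : memL a ts = true := by rw [memL] at h; simp [ha] at h; exact h
          simp [idxOf, ha, hb] at hidx
          simp [cardL, hb, ha]
          exact cardL_zero_of_idx s b a ts hma hidx

theorem cardL_sb_of_idx (s : ℕ → ℕ) (b a : ℕ) :
    ∀ l : List STree, memL a l = true → memL b l = true → idxOf b l < idxOf a l →
      cardL s b a l = s b
  | [], h, _, _ => by simp [memL] at h
  | t :: ts, ha, hb, hidx => by
      by_cases hat : mem a t = true
      · simp [idxOf, hat] at hidx
      · have hma : memL a ts = true := by rw [memL] at ha; simp [hat] at ha; exact ha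
        by_cases hbt : mem b t = true
        · simp [cardL, hbt, hat, hma]
        · have hmb : memL b ts = true := by rw [memL] at hb; simp [hbt] at hb; exact hb
          simp [idxOf, hat, hbt] at hidx
          simp [cardL, hbt, hat]
          exact cardL_sb_of_idx s b a ts hma hmb hidx

mutual
theorem card_trans (s : ℕ → ℕ) (a b c : ℕ) (hab : a < b) (hbc : b < c) :
    ∀ t : STree, wf s t → mem a t = true → mem b t = true → mem c t = true →
      card s b a t = 0 ∨ card s c b t ≤ card s c a t
  | .leaf, _, ha, _, _ => by simp [mem] at ha
  | .node r cs, hw, ha, hb, hc => by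
      rw [wf] at hw
      obtain ⟨hlen, hlt, hwl⟩ := hw
      have key : ∀ x : ℕ, mem x (STree.node r cs) = true → x ≠ r →
          memL x cs = true ∧ x < r := by
        intro x hx hxr
        rw [mem] at hx; simp at hx
        rcases hx with h1 | h1
        · exact absurd h1 hxr
        · exact ⟨h1, hlt x ((memL_iff x cs).mp h1)⟩
      by_cases hrc : r = c
      · subst hrc
        have hmb := (key b hb (by omega)).1
        have hma := (key a ha (by omega)).1
        rw [card, card, card, if_neg (show ¬ r = b by omega), if_pos (rfl : r = r),
          if_pos (rfl : r = r)]
        rcases le_or_gt (idxOf b cs) (idxOf a cs) with h | h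
        · exact Or.inr h
        · exact Or.inl (cardL_zero_of_idx s b a cs hma h)
      · have hcc := key c hc (fun h => hrc h.symm)
        have hmb := (key b hb (by omega)).1
        have hma := (key a ha (by omega)).1
        rw [card, card, card, if_neg (show ¬ r = b by omega), if_neg hrc, if_neg hrc]
        exact cardL_trans s a b c hab hbc cs hwl hma hmb hcc.1
theorem cardL_trans (s : ℕ → ℕ) (a b c : ℕ) (hab : a < b) (hbc : b < c) :
    ∀ l : List STree, wfL s l → memL a l = true → memL b l = true → memL c l = true →
      cardL s b a l = 0 ∨ cardL s c b l ≤ cardL s c a l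
  | [], _, ha, _, _ => by simp [memL] at ha
  | t :: ts, hw, ha, hb, hc => by
      rw [wfL] at hw
      rw [memL] at ha hb hc; simp at ha hb hc
      cases hat : mem a t <;> cases hbt : mem b t <;> cases hct : mem c t <;>
        simp [hat, hbt, hct] at ha hb hc
      · -- FFF
        simp only [cardL, hat, hbt, hct, Bool.false_eq_true, if_false]
        exact cardL_trans s a b c hab hbc ts hw.2 ha hb hc
      · -- FFT : c in t only
        right; simp [cardL, hat, hbt, hct, ha, hb]
      · -- FTF : b in t only
        right; simp [cardL, hat, hbt, hct]
      · -- FTT : b c in t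
        right
        simp [cardL, hat, hbt, hct, ha]
        exact card_le s c b (by omega) t hw.1 hbt
      · -- TFF : a in t only
        left; simp [cardL, hat, hbt]
      · -- TFT : a c in t
        left; simp [cardL, hat, hbt]
      · -- TTF : a b in t
        right; simp [cardL, hbt, hct]
      · -- TTT
        simp only [cardL, hat, hbt, hct, if_true]
        exact card_trans s a b c hab hbc t hw.1 hat hbt hct
end

mutual
theorem card_planar (s : ℕ → ℕ) (a b c : ℕ) (hab : a < b) (hbc : b < c) :
    ∀ t : STree, wf s t → mem a t = true → mem b t = true → mem c t = true →
      card s b a t = s b ∨ card s c a t ≤ card s c b t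
  | .leaf, _, ha, _, _ => by simp [mem] at ha
  | .node r cs, hw, ha, hb, hc => by
      rw [wf] at hw
      obtain ⟨hlen, hlt, hwl⟩ := hw
      have key : ∀ x : ℕ, mem x (STree.node r cs) = true → x ≠ r →
          memL x cs = true ∧ x < r := by
        intro x hx hxr
        rw [mem] at hx; simp at hx
        rcases hx with h1 | h1
        · exact absurd h1 hxr
        · exact ⟨h1, hlt x ((memL_iff x cs).mp h1)⟩
      by_cases hrc : r = c
      · subst hrc
        have hmb := (key b hb (by omega)).1
        have hma := (key a ha (by omega)).1
        rw [card, card, card, if_neg (show ¬ r = b by omega), if_pos (rfl : r = r),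
          if_pos (rfl : r = r)]
        rcases le_or_gt (idxOf a cs) (idxOf b cs) with h | h
        · exact Or.inr h
        · exact Or.inl (cardL_sb_of_idx s b a cs hma hmb h)
      · have hcc := key c hc (fun h => hrc h.symm)
        have hmb := (key b hb (by omega)).1
        have hma := (key a ha (by omega)).1
        rw [card, card, card, if_neg (show ¬ r = b by omega), if_neg hrc, if_neg hrc]
        exact cardL_planar s a b c hab hbc cs hwl hma hmb hcc.1
theorem cardL_planar (s : ℕ → ℕ) (a b c : ℕ) (hab : a < b) (hbc : b < c) :
    ∀ l : List STree, wfL s l → memL a l = true → memL b l = true → memL c l = true →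
      cardL s b a l = s b ∨ cardL s c a l ≤ cardL s c b l
  | [], _, ha, _, _ => by simp [memL] at ha
  | t :: ts, hw, ha, hb, hc => by
      rw [wfL] at hw
      rw [memL] at ha hb hc; simp at ha hb hc
      cases hat : mem a t <;> cases hbt : mem b t <;> cases hct : mem c t <;>
        simp [hat, hbt, hct] at ha hb hc
      · -- FFF
        simp only [cardL, hat, hbt, hct, Bool.false_eq_true, if_false]
        exact cardL_planar s a b c hab hbc ts hw.2 ha hb hc
      · -- FFT : c in t only
        right; simp [cardL, hat, hbt, hct, ha, hb]
      · -- FTF : b in t only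
        left; simp [cardL, hat, hbt, ha]
      · -- FTT : b c in t
        left; simp [cardL, hat, hbt, ha]
      · -- TFF : a in t only
        right; simp [cardL, hat, hct]
      · -- TFT : a c in t
        right
        simp [cardL, hat, hbt, hct, hb]
        exact card_le s c a (by omega) t hw.1 hat
      · -- TTF : a b in t
        right; simp [cardL, hat, hct]
      · -- TTT
        simp only [cardL, hat, hbt, hct, if_true]
        exact card_planar s a b c hab hbc t hw.1 hat hbt hct
end

end STree
namespace STree

theorem mem_of_sdec {n : ℕ} {s : ℕ → ℕ} {T : STree} (h : IsSDecreasingTree n s T)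
    {x : ℕ} (h1 : 1 ≤ x) (h2 : x ≤ n) : mem x T = true := by
  rw [mem_iff, h.2.mem_iff, List.mem_range'_1]
  omega

theorem treeInv_supported {n : ℕ} {s : ℕ → ℕ} {T : STree} :
    ∀ y x, ¬(1 ≤ x ∧ x < y ∧ y ≤ n) → treeInv n s T y x = 0 := by
  intro y x h
  simp only [treeInv, if_neg h]

theorem treeInv_bounded {n : ℕ} {s : ℕ → ℕ} {T : STree} (h : IsSDecreasingTree n s T) :
    ∀ y x, treeInv n s T y x ≤ s y := by
  intro y x
  simp only [treeInv]
  split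
  · next hc =>
      exact card_le s y x (by omega) T h.1 (mem_of_sdec h (by omega) (by omega))
  · omega

theorem treeInv_trans {n : ℕ} {s : ℕ → ℕ} {T : STree} (h : IsSDecreasingTree n s T) :
    InvTransitive (treeInv n s T) := by
  intro a b c hab hbc
  by_cases h1 : 1 ≤ a ∧ a < b ∧ b ≤ n
  · by_cases h2 : c ≤ n
    · have ma := mem_of_sdec h (x := a) (by omega) (by omega)
      have mb := mem_of_sdec h (x := b) (by omega) (by omega)
      have mc := mem_of_sdec h (x := c) (by omega) (by omega)
      simp only [treeInv, if_pos h1, if_pos (show 1 ≤ b ∧ b < c ∧ c ≤ n by omega),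
        if_pos (show 1 ≤ a ∧ a < c ∧ c ≤ n by omega)]
      exact card_trans s a b c hab hbc T h.1 ma mb mc
    · right
      simp only [treeInv, if_neg (show ¬(1 ≤ b ∧ b < c ∧ c ≤ n) by omega)]
      omega
  · left
    simp only [treeInv, if_neg h1]

theorem treeInv_planar {n : ℕ} {s : ℕ → ℕ} {T : STree} (h : IsSDecreasingTree n s T) :
    InvPlanar s (treeInv n s T) := by
  intro a b c hab hbc
  by_cases h1 : 1 ≤ a
  · by_cases h2 : c ≤ n
    · have ma := mem_of_sdec h (x := a) (by omega) (by omega)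
      have mb := mem_of_sdec h (x := b) (by omega) (by omega)
      have mc := mem_of_sdec h (x := c) (by omega) (by omega)
      simp only [treeInv, if_pos (show 1 ≤ a ∧ a < b ∧ b ≤ n by omega),
        if_pos (show 1 ≤ b ∧ b < c ∧ c ≤ n by omega),
        if_pos (show 1 ≤ a ∧ a < c ∧ c ≤ n by omega)]
      exact card_planar s a b c hab hbc T h.1 ma mb mc
    · right
      simp only [treeInv, if_neg (show ¬(1 ≤ a ∧ a < c ∧ c ≤ n) by omega)]
      omega
  · right
    simp only [treeInv, if_neg (show ¬(1 ≤ a ∧ a < c ∧ c ≤ n) by omega)]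
    omega

end STree
namespace STree

/-- The one-step relation used in `tc`. -/
def tcRel (I : ℕ → ℕ → ℕ) : ℕ → ℕ → Prop := fun u w => w < u ∧ 0 < I u w

/-- The set of chain values used in `tc`. -/
def tcSet (I : ℕ → ℕ → ℕ) (c a : ℕ) : Set ℕ :=
  {v | ∃ (b : ℕ) (l : List ℕ),
    List.Chain (fun u w => w < u ∧ 0 < I u w) c (b :: l) ∧
    (b :: l).getLast (List.cons_ne_nil b l) = a ∧ v = I c b}

theorem tc_eq_sSup (I : ℕ → ℕ → ℕ) (c a : ℕ) : tc I c a = sSup (tcSet I c a) := rfl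

theorem tcSet_bddAbove {s : ℕ → ℕ} {I : ℕ → ℕ → ℕ} (hb : ∀ y x, I y x ≤ s y) (c a : ℕ) :
    BddAbove (tcSet I c a) := by
  refine ⟨s c, fun v hv => ?_⟩
  obtain ⟨b, l, _, _, hv⟩ := hv
  exact hv ▸ hb c b

theorem tc_le_s {s : ℕ → ℕ} {I : ℕ → ℕ → ℕ} (hb : ∀ y x, I y x ≤ s y) (c a : ℕ) :
    tc I c a ≤ s c := by
  rw [tc_eq_sSup]
  rcases Set.eq_empty_or_nonempty (tcSet I c a) with h | h
  · rw [h, csSup_empty]; exact Nat.zero_le _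
  · exact csSup_le h (fun v hv => by obtain ⟨b, l, _, _, hv⟩ := hv; exact hv ▸ hb c b)

theorem le_tc {s : ℕ → ℕ} {I : ℕ → ℕ → ℕ} (hb : ∀ y x, I y x ≤ s y) {c a v : ℕ}
    (hv : v ∈ tcSet I c a) : v ≤ tc I c a :=
  le_csSup (tcSet_bddAbove hb c a) hv

theorem tc_eq_zero_of_empty {I : ℕ → ℕ → ℕ} {c a : ℕ} (h : tcSet I c a = ∅) :
    tc I c a = 0 := by
  rw [tc_eq_sSup, h, csSup_empty]
  rfl

theorem tcSet_nonempty_of_ne {I : ℕ → ℕ → ℕ} {c a : ℕ} (h : tc I c a ≠ 0) :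
    (tcSet I c a).Nonempty := by
  rcases Set.eq_empty_or_nonempty (tcSet I c a) with h' | h'
  · exact absurd (tc_eq_zero_of_empty h') h
  · exact h'

theorem tc_le_of_forall {I : ℕ → ℕ → ℕ} {c a m : ℕ}
    (h : ∀ v ∈ tcSet I c a, v ≤ m) : tc I c a ≤ m := by
  rw [tc_eq_sSup]
  rcases Set.eq_empty_or_nonempty (tcSet I c a) with h' | h'
  · rw [h', csSup_empty]; exact Nat.zero_le _
  · exact csSup_le h' h

/-- Chains go down, and stay in the support range. -/
theorem chain_last_props {n : ℕ} {I : ℕ → ℕ → ℕ}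
    (hsup : ∀ y x, ¬(1 ≤ x ∧ x < y ∧ y ≤ n) → I y x = 0) :
    ∀ (l : List ℕ) (u : ℕ) (h : l ≠ []),
      List.Chain (fun u w => w < u ∧ 0 < I u w) u l →
      l.getLast h < u ∧ 1 ≤ l.getLast h ∧ u ≤ n
  | [], _, h, _ => absurd rfl h
  | w :: rest, u, _, hch => by
      rw [List.Chain, List.chain_cons] at hch
      have hr : 1 ≤ w ∧ w < u ∧ u ≤ n := by
        by_contra hcon
        have := hsup u w hcon
        omega
      rcases eq_or_ne rest [] with hre | hre
      · subst hre
        simp only [List.getLast_singleton]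
        omega
      · have ih := chain_last_props hsup rest w hre hch.2
        rw [List.getLast_cons hre]
        omega

theorem tc_supported {n : ℕ} {I : ℕ → ℕ → ℕ}
    (hsup : ∀ y x, ¬(1 ≤ x ∧ x < y ∧ y ≤ n) → I y x = 0) :
    ∀ c a, ¬(1 ≤ a ∧ a < c ∧ c ≤ n) → tc I c a = 0 := by
  intro c a h
  apply tc_eq_zero_of_empty
  rw [Set.eq_empty_iff_forall_notMem]
  rintro v ⟨b, l, hch, hlast, hv⟩
  have := chain_last_props hsup (b :: l) c (List.cons_ne_nil b l) hch
  rw [hlast] at this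
  omega

theorem tc_ge {n : ℕ} {s : ℕ → ℕ} {I : ℕ → ℕ → ℕ} (hb : ∀ y x, I y x ≤ s y)
    (hsup : ∀ y x, ¬(1 ≤ x ∧ x < y ∧ y ≤ n) → I y x = 0) :
    ∀ c a, I c a ≤ tc I c a := by
  intro c a
  rcases Nat.eq_zero_or_pos (I c a) with h | h
  · omega
  · have hr : 1 ≤ a ∧ a < c ∧ c ≤ n := by
      by_contra hcon
      have := hsup c a hcon
      omega
    refine le_tc hb ⟨a, [], ?_, List.getLast_singleton (a := a) _, rfl⟩
    rw [List.Chain, List.chain_cons]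
    exact ⟨⟨by omega, h⟩, List.Chain.nil⟩

/-- Concatenation of chains. -/
theorem tcSet_trans_mem {I : ℕ → ℕ → ℕ} {c d a v : ℕ}
    (hv : v ∈ tcSet I c d) (h2 : (tcSet I d a).Nonempty) : v ∈ tcSet I c a := by
  obtain ⟨b, l, hch, hlast, hveq⟩ := hv
  obtain ⟨v', b', l', hch', hlast', _⟩ := h2
  refine ⟨b, l ++ b' :: l', ?_, ?_, hveq⟩
  · have hsplit : b :: (l ++ b' :: l') = ((b :: l).dropLast ++ [d]) ++ b' :: l' := by
      rw [← hlast, List.dropLast_append_getLast]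
      simp
    rw [hsplit, List.append_assoc, List.singleton_append, List.Chain, List.isChain_cons_split]
    constructor
    · rw [(by rw [← hlast, List.dropLast_append_getLast] :
          (b :: l).dropLast ++ [d] = b :: l)]
      exact hch
    · exact hch'
  · have key : ∀ (L : List ℕ) (hL : L ≠ []), L = (b :: l) ++ (b' :: l') → L.getLast hL = a := by
      intro L hL hEq
      subst hEq
      rw [List.getLast_append_of_ne_nil _ (List.cons_ne_nil b' l')]
      exact hlast'
    exact key _ _ (by simp)

theorem tc_trans {s : ℕ → ℕ} {I : ℕ → ℕ → ℕ} (hb : ∀ y x, I y x ≤ s y) :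
    InvTransitive (tc I) := by
  intro a b c hab hbc
  by_cases h : tc I b a = 0
  · exact Or.inl h
  · right
    have hne := tcSet_nonempty_of_ne h
    apply tc_le_of_forall
    intro v hv
    exact le_tc hb (tcSet_trans_mem hv hne)

theorem tc_min {s : ℕ → ℕ} {I M : ℕ → ℕ → ℕ} (hb : ∀ y x, I y x ≤ s y)
    (hIM : ∀ y x, I y x ≤ M y x) (hM : InvTransitive M) :
    ∀ c a, tc I c a ≤ M c a := by
  have descend : ∀ (l : List ℕ) (w : ℕ),
      List.Chain (fun u w => w < u ∧ 0 < I u w) w l →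
      ∀ c, w < c → M c w ≤ M c ((w :: l).getLast (List.cons_ne_nil w l)) := by
    intro l
    induction l with
    | nil => intro w _ c _; simp
    | cons w2 rest ih =>
        intro w hch c hwc
        rw [List.Chain, List.chain_cons] at hch
        have h1 : M w w2 ≠ 0 := by
          have := hIM w w2
          omega
        have h2 : M c w ≤ M c w2 := by
          rcases hM w2 w c hch.1.1 hwc with h | h
          · exact absurd h h1
          · exact h
        calc M c w ≤ M c w2 := h2
          _ ≤ M c ((w2 :: rest).getLast (List.cons_ne_nil w2 rest)) :=
              ih w2 hch.2 c (by omega)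
          _ = M c ((w :: w2 :: rest).getLast (List.cons_ne_nil _ _)) := by
              rw [List.getLast_cons (List.cons_ne_nil w2 rest)]
  intro c a
  apply tc_le_of_forall
  rintro v ⟨b, l, hch, hlast, hv⟩
  rw [List.Chain, List.chain_cons] at hch
  calc v = I c b := hv
    _ ≤ M c b := hIM c b
    _ ≤ M c ((b :: l).getLast (List.cons_ne_nil b l)) := descend l b hch.2 c hch.1.1
    _ = M c a := by rw [hlast]

end STree
namespace STree

theorem getLast_cons' (x y : ℕ) (l : List ℕ) :
    (x :: y :: l).getLast (List.cons_ne_nil _ _) =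
      (y :: l).getLast (List.cons_ne_nil _ _) :=
  List.getLast_cons _

theorem tc_planar {s : ℕ → ℕ} {I₁ I₂ : ℕ → ℕ → ℕ}
    (hp1 : InvPlanar s I₁) (hp2 : InvPlanar s I₂)
    (hb : ∀ y x, invUnion I₁ I₂ y x ≤ s y) :
    InvPlanar s (tc (invUnion I₁ I₂)) := by
  intro a b c hab hbc
  by_cases hsb : s b = 0
  · left
    have := tc_le_s hb b a
    omega
  by_cases hba : tc (invUnion I₁ I₂) b a = s b
  · exact Or.inl hba
  right
  -- key contradiction helper: a positive chain from b to a with first value s b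
  have contra : ∀ (w2 : ℕ) (rest : List ℕ), w2 < b →
      invUnion I₁ I₂ b w2 = s b →
      List.Chain (fun u w => w < u ∧ 0 < invUnion I₁ I₂ u w) w2 rest →
      (w2 :: rest).getLast (List.cons_ne_nil _ _) = a → False := by
    intro w2 rest hw2 hval hch hlast
    apply hba
    apply le_antisymm (tc_le_s hb b a)
    have hmem : invUnion I₁ I₂ b w2 ∈ tcSet (invUnion I₁ I₂) b a := by
      refine ⟨w2, rest, ?_, hlast, rfl⟩
      rw [List.Chain, List.chain_cons]
      exact ⟨⟨hw2, by omega⟩, hch⟩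
    have := le_tc hb hmem
    omega
  have reroute : ∀ (l : List ℕ) (w u : ℕ), b < w →
      List.Chain (fun u w => w < u ∧ 0 < invUnion I₁ I₂ u w) u (w :: l) →
      (w :: l).getLast (List.cons_ne_nil _ _) = a →
      ∃ l', List.Chain (fun u w => w < u ∧ 0 < invUnion I₁ I₂ u w) u (w :: l') ∧
        (w :: l').getLast (List.cons_ne_nil _ _) = b := by
    intro l
    induction l with
    | nil =>
        intro w u hbw _ hlast
        simp only [List.getLast_singleton] at hlast
        omega
    | cons w2 rest ih =>
        intro w u hbw hch hlast
        rw [List.Chain, List.chain_cons] at hch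
        have hch2 := List.chain_cons.mp hch.2
        rw [getLast_cons'] at hlast
        rcases lt_trichotomy w2 b with hw2 | hw2 | hw2
        · -- the step w → w2 jumps over b
          have hpos : 0 < I₁ w w2 ∨ 0 < I₂ w w2 := by
            have := hch2.1.2
            simp only [invUnion] at this
            omega
          have key : 0 < invUnion I₁ I₂ w b := by
            rcases hpos with hp | hp
            · rcases hp1 w2 b w hw2 hbw with hcase | hcase
              · exfalso
                refine contra w2 rest hw2 ?_ hch2.2 hlast
                have h1 : I₁ b w2 ≤ invUnion I₁ I₂ b w2 := le_max_left _ _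
                have h2 := hb b w2
                omega
              · have h1 : I₁ w b ≤ invUnion I₁ I₂ w b := le_max_left _ _
                omega
            · rcases hp2 w2 b w hw2 hbw with hcase | hcase
              · exfalso
                refine contra w2 rest hw2 ?_ hch2.2 hlast
                have h1 : I₂ b w2 ≤ invUnion I₁ I₂ b w2 := le_max_right _ _
                have h2 := hb b w2
                omega
              · have h1 : I₂ w b ≤ invUnion I₁ I₂ w b := le_max_right _ _
                omega
          refine ⟨[b], ?_, ?_⟩
          · rw [List.Chain, List.chain_cons, List.chain_cons]
            exact ⟨hch.1, ⟨hbw, key⟩, List.Chain.nil⟩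
          · rw [getLast_cons', List.getLast_singleton]
        · -- w2 = b
          refine ⟨[b], ?_, ?_⟩
          · rw [List.Chain, List.chain_cons, List.chain_cons]
            exact ⟨hch.1, hw2 ▸ hch2.1, List.Chain.nil⟩
          · rw [getLast_cons', List.getLast_singleton]
        · -- w2 > b : recurse
          obtain ⟨l', hch', hlast'⟩ := ih w2 w hw2 hch.2 hlast
          refine ⟨w2 :: l', ?_, ?_⟩
          · rw [List.Chain, List.chain_cons]
            exact ⟨hch.1, hch'⟩
          · rw [getLast_cons']
            exact hlast'
  apply tc_le_of_forall
  rintro v ⟨b₁, l, hch, hlast, hv⟩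
  have hch1 := List.chain_cons.mp hch
  have hvpos : 0 < invUnion I₁ I₂ c b₁ := hch1.1.2
  rcases lt_trichotomy b₁ b with h1 | h1 | h1
  · -- b₁ < b : use planarity at the first step
    have key : v ≤ invUnion I₁ I₂ c b := by
      rcases le_total (I₁ c b₁) (I₂ c b₁) with hm | hm
      · -- max is I₂
        rcases hp2 b₁ b c h1 hbc with hcase | hcase
        · exfalso
          refine contra b₁ l h1 ?_ hch1.2 hlast
          have h2 : I₂ b b₁ ≤ invUnion I₁ I₂ b b₁ := le_max_right _ _
          have h3 := hb b b₁
          omega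
        · have h4 : I₂ c b ≤ invUnion I₁ I₂ c b := le_max_right _ _
          have h5 : v = invUnion I₁ I₂ c b₁ := hv
          simp only [invUnion] at h5 ⊢
          omega
      · rcases hp1 b₁ b c h1 hbc with hcase | hcase
        · exfalso
          refine contra b₁ l h1 ?_ hch1.2 hlast
          have h2 : I₁ b b₁ ≤ invUnion I₁ I₂ b b₁ := le_max_left _ _
          have h3 := hb b b₁
          omega
        · have h4 : I₁ c b ≤ invUnion I₁ I₂ c b := le_max_left _ _
          have h5 : v = invUnion I₁ I₂ c b₁ := hv
          simp only [invUnion] at h5 ⊢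
          omega
    have hmem : invUnion I₁ I₂ c b ∈ tcSet (invUnion I₁ I₂) c b := by
      refine ⟨b, [], ?_, List.getLast_singleton (a := b) _, rfl⟩
      rw [List.Chain, List.chain_cons]
      refine ⟨⟨hbc, ?_⟩, List.Chain.nil⟩
      have := hv ▸ hvpos
      omega
    exact le_trans key (le_tc hb hmem)
  · -- b₁ = b
    subst h1
    exact le_tc hb ⟨b₁, [], by rw [List.Chain, List.chain_cons]; exact ⟨hch1.1, List.Chain.nil⟩,
      List.getLast_singleton (a := b₁) _, hv⟩
  · -- b₁ > b : reroute the chain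
    obtain ⟨l', hch', hlast'⟩ := reroute l b₁ c h1 hch hlast
    exact le_tc hb ⟨b₁, l', hch', hlast', hv⟩

theorem tc_tamari {s : ℕ → ℕ} {I : ℕ → ℕ → ℕ} (hb : ∀ y x, I y x ≤ s y)
    (hT : ∀ a b c : ℕ, a < b → b < c → I c a ≤ I c b) :
    ∀ a b c : ℕ, a < b → b < c → tc I c a ≤ tc I c b := by
  intro a b c hab hbc
  have reroute : ∀ (l : List ℕ) (w u : ℕ), b < w →
      List.Chain (fun u w => w < u ∧ 0 < I u w) u (w :: l) →
      (w :: l).getLast (List.cons_ne_nil _ _) = a →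
      ∃ l', List.Chain (fun u w => w < u ∧ 0 < I u w) u (w :: l') ∧
        (w :: l').getLast (List.cons_ne_nil _ _) = b := by
    intro l
    induction l with
    | nil =>
        intro w u hbw _ hlast
        simp only [List.getLast_singleton] at hlast
        omega
    | cons w2 rest ih =>
        intro w u hbw hch hlast
        rw [List.Chain, List.chain_cons] at hch
        have hch2 := List.chain_cons.mp hch.2
        rw [getLast_cons'] at hlast
        rcases lt_trichotomy w2 b with hw2 | hw2 | hw2
        · have key : 0 < I w b := by
            have := hT w2 b w hw2 hbw
            have := hch2.1.2
            omega
          refine ⟨[b], ?_, ?_⟩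
          · rw [List.Chain, List.chain_cons, List.chain_cons]
            exact ⟨hch.1, ⟨hbw, key⟩, List.Chain.nil⟩
          · rw [getLast_cons', List.getLast_singleton]
        · refine ⟨[b], ?_, ?_⟩
          · rw [List.Chain, List.chain_cons, List.chain_cons]
            exact ⟨hch.1, hw2 ▸ hch2.1, List.Chain.nil⟩
          · rw [getLast_cons', List.getLast_singleton]
        · obtain ⟨l', hch', hlast'⟩ := ih w2 w hw2 hch.2 hlast
          refine ⟨w2 :: l', ?_, ?_⟩
          · rw [List.Chain, List.chain_cons]
            exact ⟨hch.1, hch'⟩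
          · rw [getLast_cons']
            exact hlast'
  apply tc_le_of_forall
  rintro v ⟨b₁, l, hch, hlast, hv⟩
  have hch1 := List.chain_cons.mp hch
  have hvpos : 0 < I c b₁ := hch1.1.2
  rcases lt_trichotomy b₁ b with h1 | h1 | h1
  · have key : v ≤ I c b := hv ▸ hT b₁ b c h1 hbc
    have hmem : I c b ∈ tcSet I c b := by
      refine ⟨b, [], ?_, List.getLast_singleton (a := b) _, rfl⟩
      rw [List.Chain, List.chain_cons]
      exact ⟨⟨hbc, by omega⟩, List.Chain.nil⟩
    exact le_trans key (le_tc hb hmem)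
  · subst h1
    exact le_tc hb ⟨b₁, [], by rw [List.Chain, List.chain_cons]; exact ⟨hch1.1, List.Chain.nil⟩,
      List.getLast_singleton (a := b₁) _, hv⟩
  · obtain ⟨l', hch', hlast'⟩ := reroute l b₁ c h1 hch hlast
    exact le_tc hb ⟨b₁, l', hch', hlast', hv⟩

theorem tc_antiTamari {s : ℕ → ℕ} {I : ℕ → ℕ → ℕ} (hb : ∀ y x, I y x ≤ s y)
    (hA : ∀ a b c : ℕ, 1 ≤ a → a < b → b < c → I c b ≤ I c a) :
    ∀ a b c : ℕ, 1 ≤ a → a < b → b < c → tc I c b ≤ tc I c a := by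
  intro a b c ha hab hbc
  have claim : ∀ (l : List ℕ) (w u : ℕ),
      List.Chain (fun u w => w < u ∧ 0 < I u w) u (w :: l) →
      (w :: l).getLast (List.cons_ne_nil _ _) = b →
      ∃ w' l', List.Chain (fun u w => w < u ∧ 0 < I u w) u (w' :: l') ∧
        (w' :: l').getLast (List.cons_ne_nil _ _) = a ∧ I u w ≤ I u w' := by
    intro l
    induction l with
    | nil =>
        intro w u hch hlast
        simp only [List.getLast_singleton] at hlast
        rw [List.Chain, List.chain_cons] at hch
        have hwb : w = b := hlast
        have hle : I u w ≤ I u a := by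
          rw [hwb]
          exact hA a b u ha hab (hwb ▸ hch.1.1)
        refine ⟨a, [], ?_, List.getLast_singleton (a := a) _, hle⟩
        rw [List.Chain, List.chain_cons]
        refine ⟨⟨?_, ?_⟩, List.Chain.nil⟩
        · have := hch.1.1
          omega
        · have h1 := hch.1.2
          omega
    | cons w2 rest ih =>
        intro w u hch hlast
        rw [List.Chain, List.chain_cons] at hch
        rw [getLast_cons'] at hlast
        obtain ⟨w', l', h1, h2, _⟩ := ih w2 w hch.2 hlast
        refine ⟨w, w' :: l', ?_, ?_, le_refl _⟩
        · rw [List.Chain, List.chain_cons]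
          exact ⟨hch.1, h1⟩
        · rw [getLast_cons']
          exact h2
  apply tc_le_of_forall
  rintro v ⟨b₁, l, hch, hlast, hv⟩
  obtain ⟨w', l', h1, h2, h3⟩ := claim l b₁ c hch hlast
  calc v = I c b₁ := hv
    _ ≤ I c w' := h3
    _ ≤ tc I c a := le_tc hb ⟨w', l', h1, h2, rfl⟩

end STree
namespace STree

/-- Complement of an inversion set with respect to `s`. -/
def compInv (n : ℕ) (s : ℕ → ℕ) (I : ℕ → ℕ → ℕ) : ℕ → ℕ → ℕ :=
  fun y x => if 1 ≤ x ∧ x < y ∧ y ≤ n then s y - I y x else 0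

theorem comp_bounded {n : ℕ} {s : ℕ → ℕ} {I : ℕ → ℕ → ℕ} :
    ∀ y x, compInv n s I y x ≤ s y := by
  intro y x
  simp only [compInv]
  split <;> omega

theorem comp_supported {n : ℕ} {s : ℕ → ℕ} {I : ℕ → ℕ → ℕ} :
    ∀ y x, ¬(1 ≤ x ∧ x < y ∧ y ≤ n) → compInv n s I y x = 0 := by
  intro y x h
  simp only [compInv, if_neg h]

theorem comp_comp {n : ℕ} {s : ℕ → ℕ} {I : ℕ → ℕ → ℕ}
    (hb : ∀ y x, I y x ≤ s y) (hsup : ∀ y x, ¬(1 ≤ x ∧ x < y ∧ y ≤ n) → I y x = 0) :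
    ∀ y x, compInv n s (compInv n s I) y x = I y x := by
  intro y x
  by_cases h : 1 ≤ x ∧ x < y ∧ y ≤ n
  · simp only [compInv, if_pos h]
    have := hb y x
    omega
  · simp only [compInv, if_neg h]
    exact (hsup y x h).symm

theorem comp_trans_of_planar {n : ℕ} {s : ℕ → ℕ} {I : ℕ → ℕ → ℕ}
    (hp : InvPlanar s I) : InvTransitive (compInv n s I) := by
  intro a b c hab hbc
  by_cases h1 : 1 ≤ a ∧ a < b ∧ b ≤ n
  · by_cases h2 : c ≤ n
    · rcases hp a b c hab hbc with h | h
      · left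
        simp only [compInv, if_pos h1]
        omega
      · right
        simp only [compInv, if_pos (show 1 ≤ b ∧ b < c ∧ c ≤ n by omega),
          if_pos (show 1 ≤ a ∧ a < c ∧ c ≤ n by omega)]
        omega
    · right
      simp only [compInv, if_neg (show ¬(1 ≤ b ∧ b < c ∧ c ≤ n) by omega)]
      omega
  · left
    simp only [compInv, if_neg h1]

theorem comp_planar_of_trans {n : ℕ} {s : ℕ → ℕ} {I : ℕ → ℕ → ℕ}
    (ht : InvTransitive I) : InvPlanar s (compInv n s I) := by
  intro a b c hab hbc
  by_cases h1 : 1 ≤ a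
  · by_cases h2 : c ≤ n
    · rcases ht a b c hab hbc with h | h
      · left
        simp only [compInv, if_pos (show 1 ≤ a ∧ a < b ∧ b ≤ n by omega)]
        omega
      · right
        simp only [compInv, if_pos (show 1 ≤ b ∧ b < c ∧ c ≤ n by omega),
          if_pos (show 1 ≤ a ∧ a < c ∧ c ≤ n by omega)]
        omega
    · right
      simp only [compInv, if_neg (show ¬(1 ≤ a ∧ a < c ∧ c ≤ n) by omega)]
      omega
  · right
    simp only [compInv, if_neg (show ¬(1 ≤ a ∧ a < c ∧ c ≤ n) by omega)]
    omega

theorem comp_antimono {n : ℕ} {s : ℕ → ℕ} {I J : ℕ → ℕ → ℕ}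
    (h : ∀ y x, I y x ≤ J y x) : ∀ y x, compInv n s J y x ≤ compInv n s I y x := by
  intro y x
  simp only [compInv]
  split
  · have := h y x
    omega
  · omega

theorem comp_antiTamari {n : ℕ} {s : ℕ → ℕ} {I : ℕ → ℕ → ℕ}
    (hT : ∀ a b c : ℕ, a < b → b < c → I c a ≤ I c b) :
    ∀ a b c : ℕ, 1 ≤ a → a < b → b < c → compInv n s I c b ≤ compInv n s I c a := by
  intro a b c ha hab hbc
  by_cases h2 : c ≤ n
  · simp only [compInv, if_pos (show 1 ≤ b ∧ b < c ∧ c ≤ n by omega),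
      if_pos (show 1 ≤ a ∧ a < c ∧ c ≤ n by omega)]
    have := hT a b c hab hbc
    omega
  · simp only [compInv, if_neg (show ¬(1 ≤ b ∧ b < c ∧ c ≤ n) by omega),
      if_neg (show ¬(1 ≤ a ∧ a < c ∧ c ≤ n) by omega)]
    omega

end STree
namespace STree

/-- Build an `s`-decreasing tree on label set `A` realizing the inversion set `I`. -/
def build (s : ℕ → ℕ) (I : ℕ → ℕ → ℕ) (A : Finset ℕ) : STree :=
  if h : A.Nonempty then
    STree.node (A.max' h) ((List.range (s (A.max' h) + 1)).map
      (fun i => build s I ((A.erase (A.max' h)).filter (fun x => I (A.max' h) x = i))))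
  else .leaf
termination_by A.card
decreasing_by
  have h1 : ((A.erase (A.max' h)).filter (fun x => I (A.max' h) x = i)).card ≤
      (A.erase (A.max' h)).card := Finset.card_filter_le _ _
  have h2 : (A.erase (A.max' h)).card < A.card :=
    Finset.card_erase_lt_of_mem (A.max'_mem h)
  omega

theorem child_ssubset {I : ℕ → ℕ → ℕ} {A : Finset ℕ} (h : A.Nonempty) (i : ℕ) :
    (A.erase (A.max' h)).filter (fun x => I (A.max' h) x = i) ⊂ A :=
  lt_of_le_of_lt (Finset.filter_subset _ _) (Finset.erase_ssubset (A.max'_mem h))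

theorem memL_map {f : ℕ → STree} {x : ℕ} :
    ∀ l : List ℕ, memL x (l.map f) = true ↔ ∃ i ∈ l, mem x (f i) = true
  | [] => by simp [memL]
  | i :: is => by
      simp only [List.map_cons, memL, Bool.or_eq_true, memL_map is, List.mem_cons]
      constructor
      · rintro (h | ⟨j, hj, hm⟩)
        · exact ⟨i, Or.inl rfl, h⟩
        · exact ⟨j, Or.inr hj, hm⟩
      · rintro ⟨j, (rfl | hj), hm⟩
        · exact Or.inl hm
        · exact Or.inr ⟨j, hj, hm⟩

theorem labelsL_map_mem {f : ℕ → STree} {x : ℕ} :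
    ∀ l : List ℕ, x ∈ labelsL (l.map f) ↔ ∃ i ∈ l, x ∈ labels (f i)
  | [] => by simp [labelsL]
  | i :: is => by
      simp only [List.map_cons, labelsL, List.mem_append, labelsL_map_mem is,
        List.mem_cons]
      constructor
      · rintro (h | ⟨j, hj, hm⟩)
        · exact ⟨i, Or.inl rfl, h⟩
        · exact ⟨j, Or.inr hj, hm⟩
      · rintro ⟨j, (rfl | hj), hm⟩
        · exact Or.inl hm
        · exact Or.inr ⟨j, hj, hm⟩

theorem labelsL_map_nodup {f : ℕ → STree} :
    ∀ l : List ℕ, l.Nodup → (∀ i ∈ l, (labels (f i)).Nodup) →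
      (∀ i ∈ l, ∀ j ∈ l, i ≠ j → ∀ x, x ∈ labels (f i) → x ∈ labels (f j) → False) →
      (labelsL (l.map f)).Nodup
  | [], _, _, _ => by simp [labelsL]
  | i :: is, hnd, hall, hdisj => by
      simp only [List.map_cons, labelsL]
      rw [List.nodup_append']
      refine ⟨hall i (List.mem_cons_self), ?_, ?_⟩
      · exact labelsL_map_nodup is (List.nodup_cons.mp hnd).2
          (fun j hj => hall j (List.mem_cons_of_mem i hj))
          (fun j hj k hk hjk => hdisj j (List.mem_cons_of_mem i hj)
            k (List.mem_cons_of_mem i hk) hjk)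
      · intro x hx hx'
        obtain ⟨j, hj, hmj⟩ := labelsL_map_mem is |>.mp hx'
        have hij : i ≠ j := fun h => (List.nodup_cons.mp hnd).1 (h ▸ hj)
        exact hdisj i (List.mem_cons_self) j (List.mem_cons_of_mem i hj) hij x hx hmj

theorem wfL_of_forall (s : ℕ → ℕ) :
    ∀ l : List STree, (∀ t ∈ l, wf s t) → wfL s l
  | [], _ => trivial
  | t :: ts, h => by
      rw [wfL]
      exact ⟨h t (List.mem_cons_self), wfL_of_forall s ts
        (fun t' ht' => h t' (List.mem_cons_of_mem t ht'))⟩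

theorem build_mem {s : ℕ → ℕ} {I : ℕ → ℕ → ℕ} (hb : ∀ y x, I y x ≤ s y) :
    ∀ (A : Finset ℕ) (x : ℕ), mem x (build s I A) = true ↔ x ∈ A := by
  intro A
  induction A using Finset.strongInductionOn with
  | _ A ih =>
    intro x
    by_cases hA : A.Nonempty
    · rw [build, dif_pos hA]
      set m := A.max' hA with hm
      rw [mem]
      simp only [Bool.or_eq_true, beq_iff_eq, memL_map, List.mem_range]
      constructor
      · rintro (rfl | ⟨i, _, hmem⟩)
        · exact A.max'_mem hA
        · have := (ih _ (child_ssubset hA i) x).mp hmem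
          exact Finset.mem_of_mem_erase (Finset.mem_of_mem_filter _ this)
      · intro hxA
        by_cases hxm : x = m
        · exact Or.inl hxm
        · refine Or.inr ⟨I m x, by have := hb m x; omega, ?_⟩
          rw [ih _ (child_ssubset hA (I m x)) x]
          exact Finset.mem_filter.mpr ⟨Finset.mem_erase.mpr ⟨hxm, hxA⟩, rfl⟩
    · rw [build, dif_neg hA]
      rw [Finset.not_nonempty_iff_eq_empty] at hA
      simp [mem, hA]

theorem build_labels {s : ℕ → ℕ} {I : ℕ → ℕ → ℕ} (hb : ∀ y x, I y x ≤ s y) :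
    ∀ A : Finset ℕ, (labels (build s I A)).Nodup ∧
      ∀ x, x ∈ labels (build s I A) ↔ x ∈ A := by
  intro A
  induction A using Finset.strongInductionOn with
  | _ A ih =>
    by_cases hA : A.Nonempty
    · rw [build, dif_pos hA]
      set m := A.max' hA with hm
      have hmemlab : ∀ x, x ∈ labelsL ((List.range (s m + 1)).map
          (fun i => build s I ((A.erase m).filter (fun x => I m x = i)))) ↔
          x ∈ A.erase m ∧ I m x ≤ s m := by
        intro x
        rw [labelsL_map_mem]
        constructor
        · rintro ⟨i, hi, hmem⟩
          have := (ih _ (child_ssubset hA i)).2 x |>.mp hmem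
          have h2 := Finset.mem_filter.mp this
          simp only [List.mem_range] at hi
          have h22 : I m x = i := h2.2
          exact ⟨h2.1, by omega⟩
        · rintro ⟨hx, hIx⟩
          refine ⟨I m x, by simp only [List.mem_range]; omega, ?_⟩
          rw [(ih _ (child_ssubset hA (I m x))).2 x]
          exact Finset.mem_filter.mpr ⟨hx, rfl⟩
      constructor
      · rw [labels]
        rw [List.nodup_cons]
        constructor
        · intro hmem
          have := (hmemlab m).mp hmem
          exact absurd (Finset.mem_erase.mp this.1).1 (by simp)
        · apply labelsL_map_nodup _ List.nodup_range
          · intro i _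
            exact (ih _ (child_ssubset hA i)).1
          · intro i _ j _ hij x hxi hxj
            have h1 := (ih _ (child_ssubset hA i)).2 x |>.mp hxi
            have h2 := (ih _ (child_ssubset hA j)).2 x |>.mp hxj
            have e1 := (Finset.mem_filter.mp h1).2
            have e2 := (Finset.mem_filter.mp h2).2
            exact hij (e1 ▸ e2 ▸ rfl)
      · intro x
        rw [labels, List.mem_cons, hmemlab x]
        constructor
        · rintro (rfl | ⟨hx, _⟩)
          · exact A.max'_mem hA
          · exact Finset.mem_of_mem_erase hx
        · intro hxA
          by_cases hxm : x = m
          · exact Or.inl hxm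
          · exact Or.inr ⟨Finset.mem_erase.mpr ⟨hxm, hxA⟩, hb m x⟩
    · rw [build, dif_neg hA]
      rw [Finset.not_nonempty_iff_eq_empty] at hA
      simp [labels, hA]

theorem build_wf {s : ℕ → ℕ} {I : ℕ → ℕ → ℕ} (hb : ∀ y x, I y x ≤ s y) :
    ∀ A : Finset ℕ, wf s (build s I A) := by
  intro A
  induction A using Finset.strongInductionOn with
  | _ A ih =>
    by_cases hA : A.Nonempty
    · rw [build, dif_pos hA]
      set m := A.max' hA with hm
      rw [wf]
      refine ⟨by simp, ?_, ?_⟩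
      · intro b hbmem
        obtain ⟨i, _, hmem⟩ := labelsL_map_mem _ |>.mp hbmem
        have hmem' := (build_labels hb _).2 b |>.mp hmem
        have h2 := Finset.mem_erase.mp (Finset.mem_of_mem_filter _ hmem')
        have h3 : b ≤ m := Finset.le_max' A b h2.2
        have h4 : b ≠ m := h2.1
        omega
      · apply wfL_of_forall
        intro t ht
        obtain ⟨i, _, rfl⟩ := List.mem_map.mp ht
        exact ih _ (child_ssubset hA i)
    · rw [build, dif_neg hA]
      trivial

end STree
namespace STree

theorem idxOf_range'_map {f : ℕ → STree} {x j : ℕ} :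
    ∀ (k st : ℕ), st ≤ j → j < st + k →
      (∀ i, st ≤ i → i < st + k → (mem x (f i) = true ↔ i = j)) →
      idxOf x ((List.range' st k).map f) = j - st
  | 0, st, h1, h2, _ => by omega
  | k + 1, st, h1, h2, hiff => by
      rw [List.range'_succ, List.map_cons, idxOf]
      by_cases hst : st = j
      · rw [if_pos ((hiff st le_rfl (by omega)).mpr hst)]
        omega
      · have hmem : ¬ mem x (f st) = true := fun h => hst ((hiff st le_rfl (by omega)).mp h)
        rw [if_neg hmem, idxOf_range'_map k (st + 1) (by omega) (by omega)
          (fun i hi1 hi2 => hiff i (by omega) (by omega))]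
        omega

theorem cardL_range'_map (s : ℕ → ℕ) {f : ℕ → STree} (y x iy ix : ℕ) :
    ∀ (k st : ℕ), st ≤ iy → iy < st + k → st ≤ ix → ix < st + k →
      (∀ i, st ≤ i → i < st + k →
        (mem y (f i) = true ↔ i = iy) ∧ (mem x (f i) = true ↔ i = ix)) →
      cardL s y x ((List.range' st k).map f) =
        if iy = ix then card s y x (f iy) else if ix < iy then 0 else s y
  | 0, st, h1, h2, _, _, _ => by omega
  | k + 1, st, hy1, hy2, hx1, hx2, hiff => by
      rw [List.range'_succ, List.map_cons, cardL]
      by_cases hsty : st = iy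
      · have hmy : mem y (f st) = true := (hiff st le_rfl (by omega)).1.mpr hsty
        rw [if_pos hmy]
        by_cases hstx : st = ix
        · have hmx : mem x (f st) = true := (hiff st le_rfl (by omega)).2.mpr hstx
          rw [if_pos hmx, if_pos (show iy = ix by omega), ← hsty]
        · have hmx : ¬ mem x (f st) = true :=
            fun h => hstx ((hiff st le_rfl (by omega)).2.mp h)
          rw [if_neg hmx]
          have hmemL : memL x ((List.range' (st + 1) k).map f) = true :=
            memL_map _ |>.mpr ⟨ix, by rw [List.mem_range'_1]; omega,
              (hiff ix (by omega) (by omega)).2.mpr rfl⟩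
          rw [if_pos hmemL, if_neg (show ¬ iy = ix by omega),
            if_neg (show ¬ ix < iy by omega)]
      · have hmy : ¬ mem y (f st) = true :=
          fun h => hsty ((hiff st le_rfl (by omega)).1.mp h)
        rw [if_neg hmy]
        by_cases hstx : st = ix
        · have hmx : mem x (f st) = true := (hiff st le_rfl (by omega)).2.mpr hstx
          rw [if_pos hmx, if_neg (show ¬ iy = ix by omega),
            if_pos (show ix < iy by omega)]
        · have hmx : ¬ mem x (f st) = true :=
            fun h => hstx ((hiff st le_rfl (by omega)).2.mp h)
          rw [if_neg hmx]
          exact cardL_range'_map s y x iy ix k (st + 1) (by omega) (by omega)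
            (by omega) (by omega) (fun i hi1 hi2 => hiff i (by omega) (by omega))

theorem build_card {s : ℕ → ℕ} {I : ℕ → ℕ → ℕ} (hb : ∀ y x, I y x ≤ s y)
    (ht : InvTransitive I) (hp : InvPlanar s I) :
    ∀ A : Finset ℕ, ∀ y x, y ∈ A → x ∈ A → x < y →
      card s y x (build s I A) = I y x := by
  intro A
  induction A using Finset.strongInductionOn with
  | _ A ih =>
    intro y x hyA hxA hxy
    have hA : A.Nonempty := ⟨y, hyA⟩
    rw [build, dif_pos hA]
    set m := A.max' hA with hm
    set f : ℕ → STree :=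
      fun i => build s I ((A.erase m).filter (fun x => I m x = i)) with hf
    have hymax : y ≤ m := Finset.le_max' A y hyA
    have hxm : x ≠ m := by omega
    have hmemf : ∀ z, z ∈ A → z ≠ m → ∀ i, (mem z (f i) = true ↔ I m z = i) := by
      intro z hz hzm i
      rw [hf, build_mem hb]
      simp only [Finset.mem_filter, Finset.mem_erase]
      constructor
      · rintro ⟨_, h⟩; exact h
      · intro h; exact ⟨⟨hzm, hz⟩, h⟩
    by_cases hym : y = m
    · rw [card, if_pos hym.symm]
      rw [List.range_eq_range']
      rw [idxOf_range'_map (j := I m x) (s m + 1) 0 (Nat.zero_le _)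
        (by have := hb m x; omega)
        (fun i _ hi2 => by
          rw [hmemf x hxA hxm i]
          exact eq_comm)]
      rw [← hym]
      omega
    · have hym' : y < m := by
        have : y ≠ m := hym
        omega
      rw [card, if_neg (show ¬ m = y by omega)]
      rw [List.range_eq_range']
      have hiff : ∀ i, 0 ≤ i → i < 0 + (s m + 1) →
          (mem y (f i) = true ↔ i = I m y) ∧ (mem x (f i) = true ↔ i = I m x) := by
        intro i _ _
        constructor
        · rw [hmemf y hyA (by omega) i]; exact eq_comm
        · rw [hmemf x hxA hxm i]; exact eq_comm
      rw [cardL_range'_map s y x (I m y) (I m x) (s m + 1) 0 (by omega)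
        (by have := hb m y; omega) (by omega) (by have := hb m x; omega) hiff]
      rcases lt_trichotomy (I m x) (I m y) with h3 | h3 | h3
      · rw [if_neg (by omega : ¬ I m y = I m x), if_pos h3]
        rcases ht x y m hxy hym' with h | h
        · exact h.symm
        · omega
      · rw [if_pos h3.symm]
        rw [hf]
        apply ih _ (child_ssubset hA (I m y))
        · exact Finset.mem_filter.mpr ⟨Finset.mem_erase.mpr ⟨hym, hyA⟩, rfl⟩
        · exact Finset.mem_filter.mpr ⟨Finset.mem_erase.mpr ⟨hxm, hxA⟩, h3⟩
        · exact hxy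
      · rw [if_neg (by omega : ¬ I m y = I m x), if_neg (by omega : ¬ I m x < I m y)]
        rcases hp x y m hxy hym' with h | h
        · exact h.symm
        · omega

theorem build_treeInv {n : ℕ} {s : ℕ → ℕ} {I : ℕ → ℕ → ℕ} (hb : ∀ y x, I y x ≤ s y)
    (ht : InvTransitive I) (hp : InvPlanar s I)
    (hsup : ∀ y x, ¬(1 ≤ x ∧ x < y ∧ y ≤ n) → I y x = 0) :
    ∀ y x, treeInv n s (build s I (Finset.Icc 1 n)) y x = I y x := by
  intro y x
  simp only [treeInv]
  split
  · next h =>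
      exact build_card hb ht hp _ y x (Finset.mem_Icc.mpr (by omega))
        (Finset.mem_Icc.mpr (by omega)) (by omega)
  · next h => exact (hsup y x h).symm

theorem build_sdec {n : ℕ} {s : ℕ → ℕ} {I : ℕ → ℕ → ℕ} (hb : ∀ y x, I y x ≤ s y) :
    IsSDecreasingTree n s (build s I (Finset.Icc 1 n)) := by
  refine ⟨build_wf hb _, ?_⟩
  apply List.perm_of_nodup_nodup_toFinset_eq (build_labels hb _).1 List.nodup_range'
  ext z
  simp only [List.mem_toFinset, List.mem_range'_1, (build_labels hb _).2 z, Finset.mem_Icc]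
  omega

end STree
open STree in
/-- The `s`-Tamari trees form a sublattice of the `s`-weak order: the join and
the meet of two `s`-Tamari trees are again `s`-Tamari trees. -/
theorem sTamari_sublattice (n : ℕ) (s : ℕ → ℕ)
    [Lattice {T : STree // IsSDecreasingTree n s T}]
    (hle : ∀ T R : {T : STree // IsSDecreasingTree n s T},
      T ≤ R ↔ sWeakLE n s T.1 R.1) :
    ∀ T R : {T : STree // IsSDecreasingTree n s T},
      TamariProp n s T.1 → TamariProp n s R.1 →
      TamariProp n s (T ⊔ R).1 ∧ TamariProp n s (T ⊓ R).1 := by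
  intro T R hT hR
  constructor
  · -- JOIN
    set Iu : ℕ → ℕ → ℕ := invUnion (treeInv n s T.1) (treeInv n s R.1) with hIu
    have hbu : ∀ y x, Iu y x ≤ s y := by
      intro y x
      rw [hIu]
      exact max_le (treeInv_bounded T.2 y x) (treeInv_bounded R.2 y x)
    have hsupu : ∀ y x, ¬(1 ≤ x ∧ x < y ∧ y ≤ n) → Iu y x = 0 := by
      intro y x h
      have e1 := treeInv_supported (s := s) (T := T.1) y x h
      have e2 := treeInv_supported (s := s) (T := R.1) y x h
      rw [hIu]
      simp only [invUnion, e1, e2]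
      exact max_self 0
    have htcb : ∀ y x, tc Iu y x ≤ s y := fun y x => tc_le_s hbu y x
    have htct : InvTransitive (tc Iu) := tc_trans hbu
    have htcp : InvPlanar s (tc Iu) := by
      rw [hIu]
      exact tc_planar (treeInv_planar T.2) (treeInv_planar R.2) (hIu ▸ hbu)
    have htcsup := tc_supported (I := Iu) hsupu
    have hU : IsSDecreasingTree n s (build s (tc Iu) (Finset.Icc 1 n)) :=
      build_sdec htcb
    set U : {T : STree // IsSDecreasingTree n s T} :=
      ⟨build s (tc Iu) (Finset.Icc 1 n), hU⟩ with hUdef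
    have hinvU : ∀ y x, treeInv n s U.1 y x = tc Iu y x :=
      build_treeInv htcb htct htcp htcsup
    have hTU : T ≤ U := by
      rw [hle]
      intro y x
      rw [hinvU y x]
      exact le_trans (by rw [hIu]; exact le_max_left _ _) (tc_ge hbu hsupu y x)
    have hRU : R ≤ U := by
      rw [hle]
      intro y x
      rw [hinvU y x]
      exact le_trans (by rw [hIu]; exact le_max_right _ _) (tc_ge hbu hsupu y x)
    have h1 : ∀ y x, treeInv n s (T ⊔ R).1 y x ≤ tc Iu y x := by
      intro y x
      have := (hle (T ⊔ R) U).mp (sup_le hTU hRU) y x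
      rw [hinvU y x] at this
      exact this
    have h2 : ∀ y x, tc Iu y x ≤ treeInv n s (T ⊔ R).1 y x := by
      refine tc_min hbu ?_ (treeInv_trans (T ⊔ R).2)
      intro y x
      rw [hIu]
      exact max_le ((hle T (T ⊔ R)).mp le_sup_left y x)
        ((hle R (T ⊔ R)).mp le_sup_right y x)
    have heq : ∀ y x, treeInv n s (T ⊔ R).1 y x = tc Iu y x :=
      fun y x => le_antisymm (h1 y x) (h2 y x)
    intro a b c hab hbc
    rw [heq, heq]
    refine tc_tamari hbu ?_ a b c hab hbc
    intro a' b' c' h1' h2'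
    rw [hIu]
    exact max_le_max (hT a' b' c' h1' h2') (hR a' b' c' h1' h2')
  · -- MEET
    set Ju : ℕ → ℕ → ℕ := invUnion (compInv n s (treeInv n s T.1))
      (compInv n s (treeInv n s R.1)) with hJu
    have hbJ : ∀ y x, Ju y x ≤ s y := by
      intro y x
      rw [hJu]
      exact max_le (comp_bounded y x) (comp_bounded y x)
    have hsupJ : ∀ y x, ¬(1 ≤ x ∧ x < y ∧ y ≤ n) → Ju y x = 0 := by
      intro y x h
      rw [hJu]
      simp only [invUnion, comp_supported y x h]
      exact max_self 0
    have htc'b : ∀ y x, tc Ju y x ≤ s y := fun y x => tc_le_s hbJ y x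
    have htc't : InvTransitive (tc Ju) := tc_trans hbJ
    have htc'p : InvPlanar s (tc Ju) := by
      rw [hJu]
      exact tc_planar (comp_planar_of_trans (treeInv_trans T.2))
        (comp_planar_of_trans (treeInv_trans R.2)) (hJu ▸ hbJ)
    have htc'sup := tc_supported (I := Ju) hsupJ
    have htc'anti : ∀ a b c : ℕ, 1 ≤ a → a < b → b < c → tc Ju c b ≤ tc Ju c a := by
      refine tc_antiTamari hbJ ?_
      intro a b c ha hab hbc
      rw [hJu]
      exact max_le_max (comp_antiTamari hT a b c ha hab hbc)
        (comp_antiTamari hR a b c ha hab hbc)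
    set K : ℕ → ℕ → ℕ := compInv n s (tc Ju) with hK
    have hbK : ∀ y x, K y x ≤ s y := fun y x => comp_bounded y x
    have hKt : InvTransitive K := comp_trans_of_planar htc'p
    have hKp : InvPlanar s K := comp_planar_of_trans htc't
    have hKsup : ∀ y x, ¬(1 ≤ x ∧ x < y ∧ y ≤ n) → K y x = 0 :=
      fun y x h => comp_supported y x h
    have hV : IsSDecreasingTree n s (build s K (Finset.Icc 1 n)) := build_sdec hbK
    set V : {T : STree // IsSDecreasingTree n s T} :=
      ⟨build s K (Finset.Icc 1 n), hV⟩ with hVdef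
    have hinvV : ∀ y x, treeInv n s V.1 y x = K y x :=
      build_treeInv hbK hKt hKp hKsup
    have hVT : V ≤ T := by
      rw [hle]
      intro y x
      rw [hinvV y x]
      by_cases hr : 1 ≤ x ∧ x < y ∧ y ≤ n
      · have hg : compInv n s (treeInv n s T.1) y x ≤ tc Ju y x :=
          le_trans (by rw [hJu]; exact le_max_left _ _) (tc_ge hbJ hsupJ y x)
        have e2 : compInv n s (treeInv n s T.1) y x = s y - treeInv n s T.1 y x := by
          simp only [compInv, if_pos hr]
        have h3 := treeInv_bounded T.2 y x
        rw [hK]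
        simp only [compInv, if_pos hr]
        omega
      · rw [hK]
        simp only [compInv, if_neg hr]
        exact Nat.zero_le _
    have hVR : V ≤ R := by
      rw [hle]
      intro y x
      rw [hinvV y x]
      by_cases hr : 1 ≤ x ∧ x < y ∧ y ≤ n
      · have hg : compInv n s (treeInv n s R.1) y x ≤ tc Ju y x :=
          le_trans (by rw [hJu]; exact le_max_right _ _) (tc_ge hbJ hsupJ y x)
        have e2 : compInv n s (treeInv n s R.1) y x = s y - treeInv n s R.1 y x := by
          simp only [compInv, if_pos hr]
        have h3 := treeInv_bounded R.2 y x
        rw [hK]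
        simp only [compInv, if_pos hr]
        omega
      · rw [hK]
        simp only [compInv, if_neg hr]
        exact Nat.zero_le _
    have h1 : ∀ y x, K y x ≤ treeInv n s (T ⊓ R).1 y x := by
      intro y x
      have := (hle V (T ⊓ R)).mp (le_inf hVT hVR) y x
      rw [hinvV y x] at this
      exact this
    have hcM_trans : InvTransitive (compInv n s (treeInv n s (T ⊓ R).1)) :=
      comp_trans_of_planar (treeInv_planar (T ⊓ R).2)
    have hJu_le : ∀ y x, Ju y x ≤ compInv n s (treeInv n s (T ⊓ R).1) y x := by
      intro y x
      rw [hJu]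
      exact max_le (comp_antimono ((hle (T ⊓ R) T).mp inf_le_left) y x)
        (comp_antimono ((hle (T ⊓ R) R).mp inf_le_right) y x)
    have h3 : ∀ y x, tc Ju y x ≤ compInv n s (treeInv n s (T ⊓ R).1) y x :=
      tc_min hbJ hJu_le hcM_trans
    have h2 : ∀ y x, treeInv n s (T ⊓ R).1 y x ≤ K y x := by
      intro y x
      by_cases hr : 1 ≤ x ∧ x < y ∧ y ≤ n
      · have h4 := h3 y x
        have h5 : compInv n s (treeInv n s (T ⊓ R).1) y x =
            s y - treeInv n s (T ⊓ R).1 y x := by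
          simp only [compInv, if_pos hr]
        have h6 := treeInv_bounded (T ⊓ R).2 y x
        rw [hK]
        simp only [compInv, if_pos hr]
        omega
      · rw [treeInv_supported y x hr]
        exact Nat.zero_le _
    have heq : ∀ y x, treeInv n s (T ⊓ R).1 y x = K y x :=
      fun y x => le_antisymm (h2 y x) (h1 y x)
    intro a b c hab hbc
    rw [heq, heq]
    by_cases hr : 1 ≤ a ∧ a < c ∧ c ≤ n
    · have h7 := htc'anti a b c (by omega) hab hbc
      have h8 := htc'b c a
      rw [hK]
      simp only [compInv, if_pos hr, if_pos (show 1 ≤ b ∧ b < c ∧ c ≤ n by omega)]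
      omega
    · rw [hK]
      simp only [compInv, if_neg hr]
      exact Nat.zero_le _
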